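/- Let γ > 0, ν ≥ 0, τ > 0 and β ∈ ℝ with β < γ + 1. Then there exists C > 0 such that for all α ∈ (0,1]: α^{ν+1} · τ · Σ_{i ≥ 1, i^{−γ} ≥ α} i^{γ−β} ≤ C · τ · Σ_{i ≥ 1, i^{−γ} < α} i^{−(γν+β)}, where both sides are taken in [0,∞] (the right-hand side may be +∞). In particular, if TT* has eigenvalues λ_i = i^{−γ} with orthonormal eigenfunctions u_i and the noise satisfies |⟨y^δ − y, u_i⟩|² = τ i^{−β} for all i ≥ 1, then y^δ − y belongs to the noise class N_ν. -/

import Mathlib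

open scoped BigOperators
open Set ENNReal

noncomputable section

namespace NoiseExample

/-! ### Statement 19

`T T*` has eigenvalues `λ_i = i^{-γ}` (for `i ≥ 1`, modelled by `i + 1` for
`i : ℕ`) with orthonormal eigenfunctions `u_i`, and the noise `e = y^δ - y`
satisfies `|⟨e, u_i⟩|² = τ i^{-β}`.  Then `‖T‖² = sup_i λ_i = 1`.  General
spectral sums are interpreted as `∫_a^b λ^s d‖F_λ e‖² = ∑_{a < λ_i ≤ b} λ_i^s
|⟨e,u_i⟩|²`, taken in `[0,∞]`.  Membership of `e` in the noise class `N_ν`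
(see below) is expressed accordingly with values in `[0,∞]`. -/

/-- the `i`-th eigenvalue `λ_i = i^{-γ}` of `T T*` (for `i ≥ 1`). -/
def lamP (γ : ℝ) (i : ℕ) : ℝ := ((i : ℝ) + 1) ^ (-γ)

/-- membership of the noise in the class `N_ν` (with `‖T‖² = 1`), with all
spectral sums taken in `[0,∞]`:
`α^{ν+1} ∑_{λ_i > α} λ_i⁻¹ |⟨e,u_i⟩|² ≤ C ∑_{λ_i ≤ α} λ_i^ν |⟨e,u_i⟩|²`
for all `α ∈ (0,1)`, where `|⟨e,u_i⟩|² = τ i^{-β}`. -/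
def memNexample (γ ν τ β : ℝ) : Prop :=
  ∃ C > 0, ∀ α ∈ Set.Ioo (0 : ℝ) 1,
    ENNReal.ofReal (α ^ (ν + 1)) *
        ∑' i : ℕ, (if α < lamP γ i then
          ENNReal.ofReal ((lamP γ i)⁻¹ * (τ * ((i : ℝ) + 1) ^ (-β))) else 0)
      ≤ ENNReal.ofReal C *
        ∑' i : ℕ, (if lamP γ i ≤ α then
          ENNReal.ofReal ((lamP γ i) ^ ν * (τ * ((i : ℝ) + 1) ^ (-β))) else 0)

lemma aux_sum_upper (p : ℝ) (hp : -1 < p) (M : ℕ) (hM : 1 ≤ M) :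
    ∑ i ∈ Finset.range M, ((i : ℝ) + 1) ^ p ≤ (1 + 1 / (p + 1)) * (M : ℝ) ^ (p + 1) := by
  have hp1 : (0:ℝ) < p + 1 := by linarith
  have hMpos : (0:ℝ) < M := by exact_mod_cast hM
  have hM1 : (1:ℝ) ≤ (M:ℝ)^(p+1) := Real.one_le_rpow (by exact_mod_cast hM) hp1.le
  rcases le_or_gt 0 p with hp0 | hp0
  · -- each term ≤ M^p
    calc ∑ i ∈ Finset.range M, ((i : ℝ) + 1) ^ p
        ≤ ∑ _i ∈ Finset.range M, (M : ℝ) ^ p := by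
          refine Finset.sum_le_sum fun i hi => ?_
          have : (i:ℝ) + 1 ≤ M := by
            have := Finset.mem_range.mp hi; exact_mod_cast Nat.succ_le_of_lt this
          exact Real.rpow_le_rpow (by positivity) this hp0
      _ = (M:ℝ) * (M:ℝ)^p := by
          rw [Finset.sum_const, Finset.card_range, nsmul_eq_mul]
      _ = (M:ℝ)^(p+1) := by
          rw [Real.rpow_add hMpos, Real.rpow_one]; ring
      _ ≤ (1 + 1/(p+1)) * (M:ℝ)^(p+1) := by
          nlinarith [Real.rpow_nonneg (le_of_lt hMpos) (p+1), one_div_pos.mpr hp1]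
  · -- p < 0 : integral comparison
    have hanti : AntitoneOn (fun x : ℝ => x ^ p) (Icc (1:ℝ) (1 + (M-1 : ℕ))) := by
      intro x hx y hy hxy
      exact Real.rpow_le_rpow_of_nonpos (lt_of_lt_of_le one_pos hx.1) hxy hp0.le
    have hint := hanti.sum_le_integral
    have hcast : ((M - 1 : ℕ) : ℝ) = (M:ℝ) - 1 := by
      have := Nat.cast_sub hM (R := ℝ); simpa using this
    have hval : ∫ x in (1:ℝ)..(1 + (M-1:ℕ)), x ^ p = ((M:ℝ)^(p+1) - 1) / (p+1) := by
      rw [integral_rpow (Or.inl hp), hcast,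
        show (1:ℝ) + ((M:ℝ)-1) = (M:ℝ) by ring, Real.one_rpow]
    have hsplit : ∑ i ∈ Finset.range M, ((i : ℝ) + 1) ^ p
        = 1 + ∑ i ∈ Finset.range (M-1), ((1:ℝ) + ((i + 1 : ℕ) : ℝ)) ^ p := by
      have hM' : M = (M - 1) + 1 := (Nat.succ_pred_eq_of_pos hM).symm
      rw [hM', Finset.sum_range_succ']
      push_cast
      simp only [zero_add, Real.one_rpow]
      rw [add_comm]
      congr 1
      exact Finset.sum_congr rfl fun x _ => by ring_nf
    rw [hsplit]
    have h2 : ∑ i ∈ Finset.range (M-1), ((1:ℝ) + ((i + 1 : ℕ) : ℝ)) ^ p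
        ≤ ((M:ℝ)^(p+1) - 1) / (p+1) := hval ▸ hint
    have h3 : ((M:ℝ)^(p+1) - 1) / (p+1) ≤ (M:ℝ)^(p+1) / (p+1) := by
      gcongr
      linarith
    calc 1 + ∑ i ∈ Finset.range (M-1), ((1:ℝ) + ((i + 1 : ℕ) : ℝ)) ^ p
        ≤ 1 + (M:ℝ)^(p+1)/(p+1) := by linarith
      _ ≤ (1 + 1/(p+1)) * (M:ℝ)^(p+1) := by
          rw [add_mul, one_mul, div_mul_eq_mul_div, one_mul]
          linarith

lemma aux_sum_lower (s : ℝ) (M : ℕ) (hM : 1 ≤ M) :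
    (2:ℝ)^(-|s|) * (M:ℝ)^(1-s) ≤ ∑ i ∈ Finset.Ico M (2*M), ((i:ℝ)+1)^(-s) := by
  have hMpos : (0:ℝ) < M := by exact_mod_cast hM
  have key : ∀ i ∈ Finset.Ico M (2*M), (2:ℝ)^(-|s|) * (M:ℝ)^(-s) ≤ ((i:ℝ)+1)^(-s) := by
    intro i hi
    obtain ⟨h1, h2⟩ := Finset.mem_Ico.mp hi
    have hn1 : (M:ℝ) ≤ (i:ℝ)+1 := by
      have : (M:ℝ) ≤ (i:ℝ) := by exact_mod_cast h1
      linarith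
    have hn2 : (i:ℝ)+1 ≤ 2*(M:ℝ) := by
      have : (i:ℕ)+1 ≤ 2*M := Nat.succ_le_of_lt h2
      exact_mod_cast this
    rcases le_or_gt 0 s with hs | hs
    · rw [abs_of_nonneg hs, ← Real.mul_rpow (by norm_num) hMpos.le]
      exact Real.rpow_le_rpow_of_nonpos (by positivity) hn2 (neg_nonpos.mpr hs)
    · rw [abs_of_neg hs, neg_neg]
      have h2s : (2:ℝ)^s ≤ 1 := Real.rpow_le_one_of_one_le_of_nonpos one_le_two hs.le
      have hmm : (M:ℝ)^(-s) ≤ ((i:ℝ)+1)^(-s) := Real.rpow_le_rpow hMpos.le hn1 (by linarith)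
      nlinarith [Real.rpow_nonneg hMpos.le (-s), Real.rpow_pos_of_pos (show (0:ℝ)<2 by norm_num) s]
  have hcard : (Finset.Ico M (2*M)).card = M := by rw [Nat.card_Ico]; omega
  have := Finset.card_nsmul_le_sum (Finset.Ico M (2*M)) _ _ key
  rw [hcard, nsmul_eq_mul] at this
  calc (2:ℝ)^(-|s|) * (M:ℝ)^(1-s) = (M:ℝ) * ((2:ℝ)^(-|s|) * (M:ℝ)^(-s)) := by
        rw [show (1:ℝ)-s = 1 + (-s) by ring, Real.rpow_add hMpos, Real.rpow_one]; ring
    _ ≤ _ := this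

/-- the polynomial example satisfies the noise condition. -/
theorem statement19 (γ ν τ β : ℝ) (hγ : 0 < γ) (hν : 0 ≤ ν) (hτ : 0 < τ)
    (hβ : β < γ + 1) :
    (∃ C > 0, ∀ α ∈ Set.Ioc (0 : ℝ) 1,
      ENNReal.ofReal (α ^ (ν + 1) * τ) *
          ∑' i : ℕ, (if α ≤ ((i : ℝ) + 1) ^ (-γ) then
            ENNReal.ofReal (((i : ℝ) + 1) ^ (γ - β)) else 0)
        ≤ ENNReal.ofReal (C * τ) *
          ∑' i : ℕ, (if ((i : ℝ) + 1) ^ (-γ) < α then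
            ENNReal.ofReal (((i : ℝ) + 1) ^ (-(γ * ν + β))) else 0)) ∧
    memNexample γ ν τ β := by
  have hp : -1 < γ - β := by linarith
  have hp1 : (0:ℝ) < (γ - β) + 1 := by linarith
  set C : ℝ := (1 + 1 / ((γ - β) + 1)) * 2 ^ |γ * ν + β| with hC_def
  have h2abs : (0:ℝ) < 2 ^ |γ * ν + β| := Real.rpow_pos_of_pos two_pos _
  have hCpos : 0 < C := by
    apply mul_pos _ h2abs
    have : 0 < 1 / ((γ - β) + 1) := by positivity
    linarith
  have hCc : C * 2 ^ (-|γ * ν + β|) = 1 + 1 / ((γ - β) + 1) := by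
    rw [hC_def, mul_assoc, ← Real.rpow_add two_pos]
    simp
  have main : ∀ α ∈ Set.Ioc (0 : ℝ) 1,
      ENNReal.ofReal (α ^ (ν + 1) * τ) *
          ∑' i : ℕ, (if α ≤ ((i : ℝ) + 1) ^ (-γ) then
            ENNReal.ofReal (((i : ℝ) + 1) ^ (γ - β)) else 0)
        ≤ ENNReal.ofReal (C * τ) *
          ∑' i : ℕ, (if ((i : ℝ) + 1) ^ (-γ) < α then
            ENNReal.ofReal (((i : ℝ) + 1) ^ (-(γ * ν + β))) else 0) := by
    intro α hα
    obtain ⟨hα0, hα1⟩ := hα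
    set A : ℝ := α ^ (-γ⁻¹) with hA_def
    have hApos : 0 < A := Real.rpow_pos_of_pos hα0 _
    have hA1 : 1 ≤ A :=
      Real.one_le_rpow_of_pos_of_le_one_of_nonpos hα0 hα1 (neg_nonpos.mpr (inv_nonneg.mpr hγ.le))
    set M : ℕ := ⌊A⌋₊ with hM_def
    have hM1 : 1 ≤ M := Nat.le_floor (by exact_mod_cast hA1)
    have hMA : (M:ℝ) ≤ A := Nat.floor_le hApos.le
    have hAM : A < (M:ℝ) + 1 := Nat.lt_floor_add_one A
    have hMpos : (0:ℝ) < M := by exact_mod_cast hM1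
    have hAg : A ^ (-γ) = α := by
      rw [hA_def, ← Real.rpow_mul hα0.le, show -γ⁻¹ * -γ = 1 by field_simp, Real.rpow_one]
    have hcond : ∀ i : ℕ, (α ≤ ((i:ℝ)+1)^(-γ)) ↔ i < M := by
      intro i
      have hi1 : (0:ℝ) < (i:ℝ)+1 := by positivity
      constructor
      · intro h
        have h4 := Real.rpow_le_rpow_of_nonpos hα0 h (neg_nonpos.mpr (inv_nonneg.mpr hγ.le))
        rw [← Real.rpow_mul hi1.le, show -γ * -γ⁻¹ = 1 by field_simp, Real.rpow_one] at h4
        have h3 : i + 1 ≤ M := Nat.le_floor (by push_cast; linarith)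
        omega
      · intro h
        have h3 : (i:ℝ)+1 ≤ (M:ℝ) := by exact_mod_cast Nat.succ_le_of_lt h
        have h4 := Real.rpow_le_rpow_of_nonpos hi1 (le_trans h3 hMA) (neg_nonpos.mpr hγ.le)
        rwa [hAg] at h4
    have hcond' : ∀ i : ℕ, M ≤ i → ((i:ℝ)+1)^(-γ) < α := by
      intro i hi
      have hlt : A < (i:ℝ)+1 := by
        have : (M:ℝ) ≤ (i:ℝ) := by exact_mod_cast hi
        linarith
      have h4 := Real.rpow_lt_rpow_of_neg hApos hlt (neg_lt_zero.mpr hγ)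
      rwa [hAg] at h4
    have hL : (∑' i : ℕ, (if α ≤ ((i:ℝ)+1)^(-γ) then
          ENNReal.ofReal (((i:ℝ)+1)^(γ - β)) else 0))
        = ENNReal.ofReal (∑ i ∈ Finset.range M, ((i:ℝ)+1)^(γ - β)) := by
      rw [tsum_eq_sum (s := Finset.range M)
        (fun i hi => if_neg (fun h => hi (Finset.mem_range.mpr ((hcond i).mp h))))]
      rw [ENNReal.ofReal_sum_of_nonneg (fun i _ => Real.rpow_nonneg (by positivity) _)]
      exact Finset.sum_congr rfl fun i hi =>
        if_pos ((hcond i).mpr (Finset.mem_range.mp hi))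
    have hR : ENNReal.ofReal (∑ i ∈ Finset.Ico M (2*M), ((i:ℝ)+1)^(-(γ * ν + β)))
        ≤ ∑' i : ℕ, (if ((i:ℝ)+1)^(-γ) < α then
            ENNReal.ofReal (((i:ℝ)+1)^(-(γ * ν + β))) else 0) := by
      rw [ENNReal.ofReal_sum_of_nonneg (fun i _ => Real.rpow_nonneg (by positivity) _)]
      refine le_trans (le_of_eq ?_) (ENNReal.sum_le_tsum (Finset.Ico M (2*M)))
      exact Finset.sum_congr rfl fun i hi =>
        (if_pos (hcond' i (Finset.mem_Ico.mp hi).1)).symm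
    have hαM : α ^ (ν+1) ≤ (M:ℝ)^(-(γ*(ν+1))) := by
      have hαM0 : α ≤ (M:ℝ)^(-γ) := by
        have h4 := Real.rpow_le_rpow_of_nonpos hMpos hMA (neg_nonpos.mpr hγ.le)
        rwa [hAg] at h4
      calc α^(ν+1) ≤ ((M:ℝ)^(-γ))^(ν+1) := Real.rpow_le_rpow hα0.le hαM0 (by linarith)
        _ = (M:ℝ)^(-(γ*(ν+1))) := by
            rw [← Real.rpow_mul hMpos.le]; ring_nf
    have hS1 : (0:ℝ) ≤ ∑ i ∈ Finset.range M, ((i:ℝ)+1)^(γ - β) :=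
      Finset.sum_nonneg fun i _ => Real.rpow_nonneg (by positivity) _
    have key : α^(ν+1) * τ * (∑ i ∈ Finset.range M, ((i:ℝ)+1)^(γ - β))
        ≤ C * τ * (∑ i ∈ Finset.Ico M (2*M), ((i:ℝ)+1)^(-(γ * ν + β))) := by
      have h1 := aux_sum_upper (γ - β) hp M hM1
      have h2 := aux_sum_lower (γ * ν + β) M hM1
      have e1 : (M:ℝ)^(-(γ*(ν+1))) * (M:ℝ)^((γ - β)+1) = (M:ℝ)^(1-(γ * ν + β)) := by
        rw [← Real.rpow_add hMpos]; ring_nf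
      calc α^(ν+1) * τ * (∑ i ∈ Finset.range M, ((i:ℝ)+1)^(γ - β))
          ≤ (M:ℝ)^(-(γ*(ν+1))) * τ * ((1 + 1/((γ - β)+1)) * (M:ℝ)^((γ - β)+1)) := by
            apply mul_le_mul (mul_le_mul_of_nonneg_right hαM hτ.le) h1 hS1
            positivity
        _ = C * τ * ((2:ℝ)^(-(|γ * ν + β|)) * (M:ℝ)^(1-(γ * ν + β))) := by
            rw [← hCc, ← e1]; ring
        _ ≤ C * τ * (∑ i ∈ Finset.Ico M (2*M), ((i:ℝ)+1)^(-(γ * ν + β))) := by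
            apply mul_le_mul_of_nonneg_left h2 (by positivity)
    rw [hL]
    calc ENNReal.ofReal (α^(ν+1)*τ) * ENNReal.ofReal (∑ i ∈ Finset.range M, ((i:ℝ)+1)^(γ - β))
        = ENNReal.ofReal (α^(ν+1)*τ * ∑ i ∈ Finset.range M, ((i:ℝ)+1)^(γ - β)) :=
          (ENNReal.ofReal_mul (by positivity)).symm
      _ ≤ ENNReal.ofReal (C * τ * ∑ i ∈ Finset.Ico M (2*M), ((i:ℝ)+1)^(-(γ * ν + β))) :=
          ENNReal.ofReal_le_ofReal key
      _ = ENNReal.ofReal (C * τ) *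
          ENNReal.ofReal (∑ i ∈ Finset.Ico M (2*M), ((i:ℝ)+1)^(-(γ * ν + β))) :=
          ENNReal.ofReal_mul (by positivity)
      _ ≤ _ := mul_le_mul_right hR _
  refine ⟨⟨C, hCpos, main⟩, C, hCpos, ?_⟩
  intro α hα
  have h' := main α ⟨hα.1, hα.2.le⟩
  have hterm1 : ∀ i : ℕ, (lamP γ i)⁻¹ * (τ * ((i:ℝ)+1)^(-β)) = τ * ((i:ℝ)+1)^(γ-β) := by
    intro i
    have hi1 : (0:ℝ) < (i:ℝ)+1 := by positivity
    rw [lamP, Real.rpow_neg hi1.le, inv_inv, show γ - β = γ + -β by ring,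
      Real.rpow_add hi1]
    ring
  have hterm2 : ∀ i : ℕ, (lamP γ i)^ν * (τ * ((i:ℝ)+1)^(-β)) = τ * ((i:ℝ)+1)^(-(γ*ν+β)) := by
    intro i
    have hi1 : (0:ℝ) < (i:ℝ)+1 := by positivity
    rw [lamP, ← Real.rpow_mul hi1.le, show -(γ*ν+β) = -γ*ν + -β by ring,
      Real.rpow_add hi1]
    ring
  have hsum1 : (∑' i : ℕ, (if α < lamP γ i then
        ENNReal.ofReal ((lamP γ i)⁻¹ * (τ * ((i:ℝ)+1)^(-β))) else 0))
      = ENNReal.ofReal τ * ∑' i : ℕ, (if α < lamP γ i then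
        ENNReal.ofReal (((i:ℝ)+1)^(γ-β)) else 0) := by
    rw [← ENNReal.tsum_mul_left]
    refine tsum_congr fun i => ?_
    rw [hterm1 i, ENNReal.ofReal_mul hτ.le, mul_ite, mul_zero]
  have hsum2 : (∑' i : ℕ, (if lamP γ i ≤ α then
        ENNReal.ofReal ((lamP γ i)^ν * (τ * ((i:ℝ)+1)^(-β))) else 0))
      = ENNReal.ofReal τ * ∑' i : ℕ, (if lamP γ i ≤ α then
        ENNReal.ofReal (((i:ℝ)+1)^(-(γ*ν+β))) else 0) := by
    rw [← ENNReal.tsum_mul_left]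
    refine tsum_congr fun i => ?_
    rw [hterm2 i, ENNReal.ofReal_mul hτ.le, mul_ite, mul_zero]
  have hmono1 : (∑' i : ℕ, (if α < lamP γ i then
        ENNReal.ofReal (((i:ℝ)+1)^(γ-β)) else 0))
      ≤ ∑' i : ℕ, (if α ≤ ((i:ℝ)+1)^(-γ) then
        ENNReal.ofReal (((i:ℝ)+1)^(γ-β)) else 0) := by
    refine ENNReal.tsum_le_tsum fun i => ?_
    rw [show lamP γ i = ((i:ℝ)+1)^(-γ) from rfl]
    split_ifs with h1 h2
    · exact le_rfl
    · exact absurd h1.le h2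
    · exact bot_le
    · exact le_rfl
  have hmono2 : (∑' i : ℕ, (if ((i:ℝ)+1)^(-γ) < α then
        ENNReal.ofReal (((i:ℝ)+1)^(-(γ*ν+β))) else 0))
      ≤ ∑' i : ℕ, (if lamP γ i ≤ α then
        ENNReal.ofReal (((i:ℝ)+1)^(-(γ*ν+β))) else 0) := by
    refine ENNReal.tsum_le_tsum fun i => ?_
    rw [show lamP γ i = ((i:ℝ)+1)^(-γ) from rfl]
    split_ifs with h1 h2
    · exact le_rfl
    · exact absurd h1.le h2
    · exact bot_le
    · exact le_rfl
  rw [hsum1, hsum2]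
  calc ENNReal.ofReal (α^(ν+1)) * (ENNReal.ofReal τ * ∑' i : ℕ, (if α < lamP γ i then
        ENNReal.ofReal (((i:ℝ)+1)^(γ-β)) else 0))
      ≤ ENNReal.ofReal (α^(ν+1)) * (ENNReal.ofReal τ * ∑' i : ℕ,
          (if α ≤ ((i:ℝ)+1)^(-γ) then ENNReal.ofReal (((i:ℝ)+1)^(γ-β)) else 0)) :=
        mul_le_mul_right (mul_le_mul_right hmono1 _) _
    _ = ENNReal.ofReal (α^(ν+1) * τ) * ∑' i : ℕ,
          (if α ≤ ((i:ℝ)+1)^(-γ) then ENNReal.ofReal (((i:ℝ)+1)^(γ-β)) else 0) := by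
        rw [ENNReal.ofReal_mul (Real.rpow_nonneg hα.1.le _), mul_assoc]
    _ ≤ ENNReal.ofReal (C * τ) * ∑' i : ℕ,
          (if ((i:ℝ)+1)^(-γ) < α then ENNReal.ofReal (((i:ℝ)+1)^(-(γ*ν+β))) else 0) := h'
    _ = ENNReal.ofReal C * (ENNReal.ofReal τ * ∑' i : ℕ,
          (if ((i:ℝ)+1)^(-γ) < α then ENNReal.ofReal (((i:ℝ)+1)^(-(γ*ν+β))) else 0)) := by
        rw [ENNReal.ofReal_mul hCpos.le, mul_assoc]
    _ ≤ ENNReal.ofReal C * (ENNReal.ofReal τ * ∑' i : ℕ,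
          (if lamP γ i ≤ α then ENNReal.ofReal (((i:ℝ)+1)^(-(γ*ν+β))) else 0)) :=
        mul_le_mul_right (mul_le_mul_right hmono2 _) _


end NoiseExample
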